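/- Fix integers n ≥ 4 and l with 1 ≤ l and l + 2 ≤ n, and let Δp be as defined below. Let x < y < z be real numbers, let v₁ ≤ v₂ ≤ … ≤ v_n be real numbers with v_l = v_{l+1} = v_{l+2} = y, and define the clamped positions v′_i = x if v_i < x, v′_i = z if v_i > z, and v′_i = v_i otherwise. Let f_x, f_z : ℝ → ℝ each be concave on [0,∞) and nonincreasing on [0,∞). Then ∑_{i=1}^{n} Δp(i)·f_x(|x − v_i|) ≥ ∑_{i=1}^{n} Δp(i)·f_x(|x − v′_i|), and ∑_{i=1}^{n} Δp(i)·f_z(|z − v_i|) ≥ ∑_{i=1}^{n} Δp(i)·f_z(|z − v′_i|). -/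

import Mathlib

open Finset

/-- Pascal-step inequality for partial sums of binomial coefficients. -/
lemma sum_choose_succ_eq (m k : ℕ) :
    ∑ j ∈ range (k+1), (m+1).choose j
      = ∑ j ∈ range (k+1), m.choose j + ∑ j ∈ range k, m.choose j := by
  induction k with
  | zero => simp
  | succ k ih =>
    rw [sum_range_succ, ih, Nat.choose_succ_succ,
      sum_range_succ (fun j => m.choose j) (k+1), sum_range_succ (fun j => m.choose j) k]
    ring

lemma sum_choose_double (m k : ℕ) :
    ∑ j ∈ range k, (m+1).choose j ≤ 2 * ∑ j ∈ range k, m.choose j := by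
  cases k with
  | zero => simp
  | succ k =>
    rw [sum_choose_succ_eq, two_mul]
    have : ∑ j ∈ range k, m.choose j ≤ ∑ j ∈ range (k+1), m.choose j :=
      sum_le_sum_of_subset (range_subset_range.mpr (Nat.le_succ k))
    omega

lemma sum_choose_oct (m k : ℕ) :
    ∑ j ∈ range k, (m+3).choose j ≤ 8 * ∑ j ∈ range k, m.choose j := by
  calc ∑ j ∈ range k, (m+3).choose j ≤ 2 * ∑ j ∈ range k, (m+2).choose j :=
        sum_choose_double (m+2) k
    _ ≤ 2 * (2 * ∑ j ∈ range k, (m+1).choose j) :=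
        Nat.mul_le_mul_left 2 (sum_choose_double (m+1) k)
    _ ≤ 2 * (2 * (2 * ∑ j ∈ range k, m.choose j)) :=
        Nat.mul_le_mul_left 2 (Nat.mul_le_mul_left 2 (sum_choose_double m k))
    _ = 8 * ∑ j ∈ range k, m.choose j := by ring

lemma tail_choose (n k : ℕ) (h4 : 4 ≤ k) (hkn : k ≤ n) :
    ∑ j ∈ range (n+1-k), (n-1).choose (k+j-1)
      ≤ 8 * ∑ j ∈ range (n+1-k), (n-4).choose (k+j-4) := by
  set M := n + 1 - k with hM
  have e1 : ∑ j ∈ range M, (n-1).choose (k+j-1)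
      = ∑ j ∈ range M, (n-1).choose (M - 1 - j) := by
    refine sum_congr rfl fun j hj => ?_
    rw [mem_range] at hj
    have h1 : k + j - 1 ≤ n - 1 := by omega
    rw [← Nat.choose_symm h1]
    congr 1; omega
  have e2 : ∑ j ∈ range M, (n-4).choose (k+j-4)
      = ∑ j ∈ range M, (n-4).choose (M - 1 - j) := by
    refine sum_congr rfl fun j hj => ?_
    rw [mem_range] at hj
    have h1 : k + j - 4 ≤ n - 4 := by omega
    rw [← Nat.choose_symm h1]
    congr 1; omega
  rw [e1, e2, sum_range_reflect (fun j => (n-1).choose j) M,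
    sum_range_reflect (fun j => (n-4).choose j) M]
  have : n - 1 = (n - 4) + 3 := by omega
  rw [this]
  exact sum_choose_oct (n-4) M


lemma mul_nonneg_of_nonpos_nonpos' {a b : ℝ} (ha : a ≤ 0) (hb : b ≤ 0) : 0 ≤ a * b :=
  mul_nonneg_iff.mpr (Or.inr ⟨ha, hb⟩)

lemma telescope_Ico (d : ℕ → ℝ) (i b : ℕ) (h : i ≤ b) :
    ∑ k ∈ Ico i b, (d (k+1) - d k) = d b - d i := by
  induction b, h using Nat.le_induction with
  | base => simp
  | succ b hb ih => rw [Finset.sum_Ico_succ_top (by omega), ih]; ring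

lemma abel_left (p d : ℕ → ℝ) (a b : ℕ) (hab : a ≤ b)
    (hS : ∀ k, a ≤ k → k ≤ b → ∑ i ∈ Icc a k, p i ≤ 0)
    (hd : ∀ i j, a ≤ i → i ≤ j → j ≤ b → d i ≤ d j)
    (hdb : d b ≤ 0) :
    0 ≤ ∑ i ∈ Icc a b, p i * d i := by
  have hrw : ∑ i ∈ Icc a b, p i * d i
      = (∑ i ∈ Icc a b, p i) * d b
        - ∑ k ∈ Ico a b, (d (k+1) - d k) * ∑ i ∈ Icc a k, p i := by
    have h1 : ∀ i ∈ Icc a b, p i * d i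
        = p i * d b - ∑ k ∈ Ico i b, p i * (d (k+1) - d k) := by
      intro i hi
      rw [mem_Icc] at hi
      rw [← Finset.mul_sum, telescope_Ico d i b hi.2]
      ring
    rw [sum_congr rfl h1, Finset.sum_sub_distrib, ← Finset.sum_mul]
    congr 1
    rw [Finset.sum_comm' (t' := Ico a b) (s' := fun k => Icc a (k : ℕ))
      (by intro i k; simp only [mem_Icc, mem_Ico]; omega)]
    refine sum_congr rfl fun k _ => ?_
    rw [Finset.mul_sum]
    exact sum_congr rfl fun i _ => by ring
  rw [hrw]
  have t1 : 0 ≤ (∑ i ∈ Icc a b, p i) * d b :=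
    mul_nonneg_of_nonpos_nonpos' (hS b hab le_rfl) hdb
  have t2 : ∑ k ∈ Ico a b, (d (k+1) - d k) * ∑ i ∈ Icc a k, p i ≤ 0 := by
    refine sum_nonpos fun k hk => ?_
    rw [mem_Ico] at hk
    exact mul_nonpos_iff.mpr (Or.inl ⟨sub_nonneg.mpr (hd k (k+1) hk.1 (Nat.le_succ k) hk.2),
      hS k hk.1 (le_of_lt hk.2)⟩)
  linarith

lemma abel_right (p d : ℕ → ℝ) (a b : ℕ) (hab : a ≤ b)
    (hT : ∀ k, a ≤ k → k ≤ b → ∑ i ∈ Icc k b, p i ≤ 0)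
    (hd : ∀ i j, a ≤ i → i ≤ j → j ≤ b → d j ≤ d i)
    (hda : d a ≤ 0) :
    0 ≤ ∑ i ∈ Icc a b, p i * d i := by
  have hrw : ∑ i ∈ Icc a b, p i * d i
      = (∑ i ∈ Icc a b, p i) * d a
        + ∑ k ∈ Ico a b, (d (k+1) - d k) * ∑ i ∈ Icc (k+1) b, p i := by
    have h1 : ∀ i ∈ Icc a b, p i * d i
        = p i * d a + ∑ k ∈ Ico a i, p i * (d (k+1) - d k) := by
      intro i hi
      rw [mem_Icc] at hi
      rw [← Finset.mul_sum, telescope_Ico d a i hi.1]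
      ring
    rw [sum_congr rfl h1, Finset.sum_add_distrib, ← Finset.sum_mul]
    congr 1
    rw [Finset.sum_comm' (t' := Ico a b) (s' := fun k => Icc (k+1 : ℕ) b)
      (by intro i k; simp only [mem_Icc, mem_Ico]; omega)]
    refine sum_congr rfl fun k _ => ?_
    rw [Finset.mul_sum]
    exact sum_congr rfl fun i _ => by ring
  rw [hrw]
  have t1 : 0 ≤ (∑ i ∈ Icc a b, p i) * d a :=
    mul_nonneg_of_nonpos_nonpos' (hT a le_rfl hab) hda
  have t2 : 0 ≤ ∑ k ∈ Ico a b, (d (k+1) - d k) * ∑ i ∈ Icc (k+1) b, p i := by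
    refine sum_nonneg fun k hk => ?_
    rw [mem_Ico] at hk
    exact mul_nonneg_of_nonpos_nonpos'
      (sub_nonpos.mpr (hd k (k+1) hk.1 (Nat.le_succ k) hk.2))
      (hT (k+1) (by omega) hk.2)
  linarith


lemma D_left_mono (f : ℝ → ℝ) (hf : AntitoneOn f (Set.Ici 0)) (x z w u u' : ℝ)
    (hxw : x ≤ w) (huu : u ≤ u') (hu'z : u' ≤ z) :
    f |w - u| - f |w - (if u < x then x else if z < u then z else u)|
      ≤ f |w - u'| - f |w - (if u' < x then x else if z < u' then z else u')| := by
  have habs : ∀ t : ℝ, t ≤ w → |w - t| = w - t := fun t ht => abs_of_nonneg (by linarith)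
  by_cases h1 : u' < x
  · have h0 : u < x := lt_of_le_of_lt huu h1
    rw [if_pos h0, if_pos h1, habs u (by linarith), habs u' (by linarith), habs x hxw]
    have := hf (show w - u' ∈ Set.Ici (0:ℝ) by simp; linarith)
      (show w - u ∈ Set.Ici (0:ℝ) by simp; linarith) (by linarith)
    linarith
  · rw [if_neg h1, if_neg (by push_neg at h1 ⊢; linarith : ¬ z < u')]
    by_cases h0 : u < x
    · rw [if_pos h0, habs u (by linarith), habs x hxw]
      have := hf (show w - x ∈ Set.Ici (0:ℝ) by simp; linarith)
        (show w - u ∈ Set.Ici (0:ℝ) by simp; linarith) (by linarith)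
      linarith
    · rw [if_neg h0, if_neg (by push_neg at h0 h1 ⊢; linarith : ¬ z < u)]
      simp

lemma D_right_mono (f : ℝ → ℝ) (hf : AntitoneOn f (Set.Ici 0)) (x z w u u' : ℝ)
    (hwz : w ≤ z) (hxu : x ≤ u) (huu : u ≤ u') :
    f |w - u'| - f |w - (if u' < x then x else if z < u' then z else u')|
      ≤ f |w - u| - f |w - (if u < x then x else if z < u then z else u)| := by
  have habs : ∀ t : ℝ, w ≤ t → |w - t| = t - w := fun t ht => by
    rw [abs_sub_comm]; exact abs_of_nonneg (by linarith)
  rw [if_neg (not_lt.mpr hxu), if_neg (not_lt.mpr (le_trans hxu huu))]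
  by_cases h1 : z < u
  · have h0 : z < u' := lt_of_lt_of_le h1 huu
    rw [if_pos h1, if_pos h0, habs u (by linarith), habs u' (by linarith), habs z hwz]
    have := hf (show u - w ∈ Set.Ici (0:ℝ) by simp; linarith)
      (show u' - w ∈ Set.Ici (0:ℝ) by simp; linarith) (by linarith)
    linarith
  · rw [if_neg h1]
    by_cases h0 : z < u'
    · rw [if_pos h0, habs u' (by linarith), habs z hwz]
      have := hf (show z - w ∈ Set.Ici (0:ℝ) by simp; linarith)
        (show u' - w ∈ Set.Ici (0:ℝ) by simp; linarith) (by linarith)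
      linarith
    · rw [if_neg h0]
      simp

lemma master (n l : ℕ) (hn : 4 ≤ n) (hl : 1 ≤ l) (hln : l + 2 ≤ n)
    (Δp : ℕ → ℝ)
    (hΔp₁ : ∀ i : ℕ, 1 ≤ i → i ≤ l - 1 →
      Δp i = (1 / 2 : ℝ) ^ (n - 1) * ((n - 1).choose (i - 1) : ℝ)
           - (1 / 2 : ℝ) ^ (n - 4) * ((n - 4).choose (i - 1) : ℝ))
    (hΔp₃ : ∀ i : ℕ, l + 3 ≤ i → i ≤ n →
      Δp i = (1 / 2 : ℝ) ^ (n - 1) * ((n - 1).choose (i - 1) : ℝ)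
           - (1 / 2 : ℝ) ^ (n - 4) * ((n - 4).choose (i - 4) : ℝ))
    (x y z w : ℝ) (hxy : x < y) (hyz : y < z) (hxw : x ≤ w) (hwz : w ≤ z)
    (v : ℕ → ℝ)
    (hvmono : ∀ i j : ℕ, 1 ≤ i → i ≤ j → j ≤ n → v i ≤ v j)
    (hvl : v l = y) (hvl2 : v (l + 2) = y)
    (v' : ℕ → ℝ)
    (hv' : ∀ i : ℕ, v' i = if v i < x then x else if z < v i then z else v i)
    (f : ℝ → ℝ) (hf : AntitoneOn f (Set.Ici (0 : ℝ))) :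
    ∑ i ∈ Finset.Icc 1 n, Δp i * f |w - v i|
      ≥ ∑ i ∈ Finset.Icc 1 n, Δp i * f |w - v' i| := by
  rw [ge_iff_le, ← sub_nonneg, ← Finset.sum_sub_distrib]
  simp_rw [← mul_sub]
  have hc : (1 / 2 : ℝ) ^ (n - 4) = 8 * (1 / 2 : ℝ) ^ (n - 1) := by
    rw [show n - 1 = (n - 4) + 3 from by omega, pow_add]; ring
  have c1pos : (0:ℝ) < (1/2 : ℝ) ^ (n-1) := by positivity
  set D : ℕ → ℝ := fun i => f |w - v i| - f |w - v' i| with hD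
  -- split the sum
  have hsplit : ∑ i ∈ Icc 1 n, Δp i * D i
      = ∑ i ∈ Icc 1 (l-1), Δp i * D i + ∑ i ∈ Icc l (l+2), Δp i * D i
        + ∑ i ∈ Icc (l+3) n, Δp i * D i := by
    have h1 : Icc 1 (l-1) = Ico 1 l := by
      rw [← Finset.Ico_add_one_right_eq_Icc]; congr 1; omega
    have h2 : Icc l (l+2) = Ico l (l+3) := by rw [← Finset.Ico_add_one_right_eq_Icc]; rfl
    have h3 : Icc (l+3) n = Ico (l+3) (n+1) := by rw [← Finset.Ico_add_one_right_eq_Icc]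
    have h0 : Icc 1 n = Ico 1 (n+1) := by rw [← Finset.Ico_add_one_right_eq_Icc]
    rw [h0, h1, h2, h3,
      ← Finset.sum_Ico_consecutive (fun i => Δp i * D i)
        (show (1:ℕ) ≤ l by omega) (show l ≤ n+1 by omega),
      ← Finset.sum_Ico_consecutive (fun i => Δp i * D i)
        (show l ≤ l+3 by omega) (show l+3 ≤ n+1 by omega), add_assoc]
  -- middle sum is zero
  have hmid : ∑ i ∈ Icc l (l+2), Δp i * D i = 0 := by
    refine sum_eq_zero fun i hi => ?_
    rw [mem_Icc] at hi
    have hvi : v i = y := by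
      refine le_antisymm ?_ ?_
      · rw [← hvl2]; exact hvmono i (l+2) (by omega) hi.2 hln
      · rw [← hvl]; exact hvmono l i hl hi.1 (by omega)
    have hv'i : v' i = y := by
      rw [hv' i, hvi, if_neg (not_lt.mpr (le_of_lt hxy)), if_neg (not_lt.mpr (le_of_lt hyz))]
    simp [hD, hvi, hv'i]
  -- left sum
  have hleft : 0 ≤ ∑ i ∈ Icc 1 (l-1), Δp i * D i := by
    rcases Nat.lt_or_ge (l-1) 1 with hcase | hcase
    · rw [Finset.Icc_eq_empty (by omega)]; simp
    · refine abel_left Δp D 1 (l-1) hcase ?_ ?_ ?_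
      · intro k hk1 hk2
        have hterm : ∀ i ∈ Icc 1 k, Δp i
            = (1/2:ℝ)^(n-1) * ((n-1).choose (i-1) : ℝ)
              - 8 * (1/2:ℝ)^(n-1) * ((n-4).choose (i-1) : ℝ) := by
          intro i hi
          rw [mem_Icc] at hi
          rw [hΔp₁ i hi.1 (le_trans hi.2 hk2), hc]
        rw [sum_congr rfl hterm, ← Finset.Ico_add_one_right_eq_Icc, Finset.sum_Ico_eq_sum_range]
        simp only [Nat.add_sub_cancel, Nat.add_sub_cancel_left, Nat.succ_sub_one]
        rw [Finset.sum_sub_distrib, ← Finset.mul_sum, ← Finset.mul_sum]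
        have hnat := sum_choose_oct (n-4) k
        rw [show n-4+3 = n-1 from by omega] at hnat
        have hA : ∑ j ∈ range k, ((n-1).choose j : ℝ)
            ≤ 8 * ∑ j ∈ range k, ((n-4).choose j : ℝ) := by exact_mod_cast hnat
        nlinarith [mul_le_mul_of_nonneg_left hA c1pos.le]
      · intro i j h1 hij hjb
        simp only [hD]
        rw [hv' i, hv' j]
        refine D_left_mono f hf x z w (v i) (v j) hxw
          (hvmono i j h1 hij (by omega)) ?_
        have : v j ≤ v l := hvmono j l (by omega) (by omega) (by omega)
        rw [hvl] at this; linarith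
      · have hle : v (l-1) ≤ y := by
          have : v (l-1) ≤ v l := hvmono (l-1) l (by omega) (by omega) (by omega)
          rw [hvl] at this; exact this
        have key := D_left_mono f hf x z w (v (l-1)) y hxw hle (le_of_lt hyz)
        rw [if_neg (not_lt.mpr (le_of_lt hxy)), if_neg (not_lt.mpr (le_of_lt hyz))] at key
        simp only [hD]
        rw [hv' (l-1)]
        linarith
  -- right sum
  have hright : 0 ≤ ∑ i ∈ Icc (l+3) n, Δp i * D i := by
    rcases Nat.lt_or_ge n (l+3) with hcase | hcase
    · rw [Finset.Icc_eq_empty (by omega)]; simp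
    · refine abel_right Δp D (l+3) n hcase ?_ ?_ ?_
      · intro k hk1 hk2
        have hterm : ∀ i ∈ Icc k n, Δp i
            = (1/2:ℝ)^(n-1) * ((n-1).choose (i-1) : ℝ)
              - 8 * (1/2:ℝ)^(n-1) * ((n-4).choose (i-4) : ℝ) := by
          intro i hi
          rw [mem_Icc] at hi
          rw [hΔp₃ i (le_trans hk1 hi.1) hi.2, hc]
        rw [sum_congr rfl hterm, ← Finset.Ico_add_one_right_eq_Icc, Finset.sum_Ico_eq_sum_range]
        rw [Finset.sum_sub_distrib, ← Finset.mul_sum, ← Finset.mul_sum]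
        have hnat := tail_choose n k (by omega) hk2
        have hA : ∑ j ∈ range (n+1-k), ((n-1).choose (k+j-1) : ℝ)
            ≤ 8 * ∑ j ∈ range (n+1-k), ((n-4).choose (k+j-4) : ℝ) := by
          exact_mod_cast hnat
        nlinarith [mul_le_mul_of_nonneg_left hA c1pos.le]
      · intro i j h1 hij hjb
        simp only [hD]
        rw [hv' i, hv' j]
        refine D_right_mono f hf x z w (v i) (v j) hwz ?_ (hvmono i j (by omega) hij hjb)
        have : v l ≤ v i := hvmono l i hl (by omega) (by omega)
        rw [hvl] at this; linarith
      · have hge : y ≤ v (l+3) := by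
          have : v l ≤ v (l+3) := hvmono l (l+3) hl (by omega) (by omega)
          rw [hvl] at this; exact this
        have key := D_right_mono f hf x z w y (v (l+3)) hwz (le_of_lt hxy) hge
        rw [if_neg (not_lt.mpr (le_of_lt hxy)), if_neg (not_lt.mpr (le_of_lt hyz))] at key
        simp only [hD]
        rw [hv' (l+3)]
        linarith
  rw [hsplit, hmid]
  linarith


theorem existence_lemma_partB
    (n l : ℕ) (hn : 4 ≤ n) (hl : 1 ≤ l) (hln : l + 2 ≤ n)
    (Δp : ℕ → ℝ)
    (hΔp₁ : ∀ i : ℕ, 1 ≤ i → i ≤ l - 1 →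
      Δp i = (1 / 2 : ℝ) ^ (n - 1) * ((n - 1).choose (i - 1) : ℝ)
           - (1 / 2 : ℝ) ^ (n - 4) * ((n - 4).choose (i - 1) : ℝ))
    (hΔp₂ : ∀ i : ℕ, l ≤ i → i ≤ l + 2 →
      Δp i = (1 / 2 : ℝ) ^ (n - 1) * ((n - 1).choose (i - 1) : ℝ))
    (hΔp₃ : ∀ i : ℕ, l + 3 ≤ i → i ≤ n →
      Δp i = (1 / 2 : ℝ) ^ (n - 1) * ((n - 1).choose (i - 1) : ℝ)
           - (1 / 2 : ℝ) ^ (n - 4) * ((n - 4).choose (i - 4) : ℝ))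
    (x y z : ℝ) (hxy : x < y) (hyz : y < z)
    (v : ℕ → ℝ)
    (hvmono : ∀ i j : ℕ, 1 ≤ i → i ≤ j → j ≤ n → v i ≤ v j)
    (hvl : v l = y) (hvl1 : v (l + 1) = y) (hvl2 : v (l + 2) = y)
    (v' : ℕ → ℝ)
    (hv' : ∀ i : ℕ, v' i = if v i < x then x else if z < v i then z else v i)
    (fx fz : ℝ → ℝ)
    (hfx_conc : ConcaveOn ℝ (Set.Ici (0 : ℝ)) fx)
    (hfx_anti : AntitoneOn fx (Set.Ici (0 : ℝ)))
    (hfz_conc : ConcaveOn ℝ (Set.Ici (0 : ℝ)) fz)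
    (hfz_anti : AntitoneOn fz (Set.Ici (0 : ℝ))) :
    (∑ i ∈ Finset.Icc 1 n, Δp i * fx |x - v i|
      ≥ ∑ i ∈ Finset.Icc 1 n, Δp i * fx |x - v' i|) ∧
    (∑ i ∈ Finset.Icc 1 n, Δp i * fz |z - v i|
      ≥ ∑ i ∈ Finset.Icc 1 n, Δp i * fz |z - v' i|) := by
  constructor
  · exact master n l hn hl hln Δp hΔp₁ hΔp₃ x y z x hxy hyz le_rfl
      (by linarith) v hvmono hvl hvl2 v' hv' fx hfx_anti
  · exact master n l hn hl hln Δp hΔp₁ hΔp₃ x y z z hxy hyz (by linarith)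
      le_rfl v hvmono hvl hvl2 v' hv' fz hfz_anti
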